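/- Suppose F is a 2-balanced graph with at least two edges and F₁, F₂ are graphs isomorphic to F that intersect in at least one, but not all, edges. If p = p(n) satisfies 0 < p and p = o(n^{−1/m₂(F)}), then n^{v_F} p^{e_F} / (n^{v_{F₁∪F₂}} p^{e_{F₁∪F₂}}) → ∞ as n → ∞. -/

import Mathlib

open Filter Asymptotics
open scoped Classical ENNReal

noncomputable section

namespace OG

/-! ### Finite graphs, represented as subgraphs of a complete graph -/

abbrev Sub (W : Type*) := (⊤ : SimpleGraph W).Subgraph

variable {W U X : Type*}

/-- number of vertices -/
def nverts (G : Sub W) : ℕ := G.verts.ncard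

/-- number of edges -/
def nedges (G : Sub W) : ℕ := G.edgeSet.ncard

/-- the density `d(G) = e_G / v_G` -/
def dd (G : Sub W) : ℝ := (nedges G : ℝ) / (nverts G : ℝ)

/-- the `1`-density `d₁(G) = e_G / (v_G - 1)` -/
def d1 (G : Sub W) : ℝ := (nedges G : ℝ) / ((nverts G : ℝ) - 1)

/-- the `2`-density `d₂(G) = (e_G - 1)/(v_G - 2)` -/
def d2 (G : Sub W) : ℝ := ((nedges G : ℝ) - 1) / ((nverts G : ℝ) - 2)

/-- `m(G) = max_{H ⊆ G} d(H)` -/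
def mD (G : Sub W) : ℝ := ⨆ H : {H : Sub W // H ≤ G}, dd H.1

/-- `m₁(G) = max_{H ⊆ G} d₁(H)` -/
def m1D (G : Sub W) : ℝ := ⨆ H : {H : Sub W // H ≤ G}, d1 H.1

/-- `m₂(G) = max_{H ⊆ G} d₂(H)` (over subgraphs with at least one edge;
on edgeless subgraphs the convention `0/0 = 0` applies) -/
def m2D (G : Sub W) : ℝ := ⨆ H : {H : Sub W // H ≤ G ∧ 1 ≤ nedges H}, d2 H.1

/-- `G` is 2-balanced if `m₂(G) = d₂(G)`. -/
def TwoBalanced (G : Sub W) : Prop := m2D G = d2 G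

/-- the recursively defined densities `m̄ʳ₂(G)`. -/
def mbar (G : Sub W) : ℕ → ℝ
  | 0 => 0
  | 1 => mD G
  | k + 2 => ⨆ H : {H : Sub W // H ≤ G},
      (nedges H.1 : ℝ) / ((nverts H.1 : ℝ) - 2 + 1 / mbar G (k + 1))

/-- view a `SimpleGraph` on a vertex type `V` as a graph with vertex set all of `V`. -/
def toSub {V : Type*} (G : SimpleGraph V) : Sub V where
  verts := Set.univ
  Adj := G.Adj
  adj_sub := fun h => G.ne_of_adj h
  edge_vert := fun _ => Set.mem_univ _
  symm := G.symm

/-! ### Rooted graphs -/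

/-- number of edges of `G` inside the root set `R`, i.e. `e_{G[R]}`. -/
def rInEdges (R : Set W) (G : Sub W) : ℕ := {e ∈ G.edgeSet | ∀ x ∈ e, x ∈ R}.ncard

/-- the density `d(R,G) = ē_G / v̄_G` of a rooted graph (with the roots `R ∩ V(G)`). -/
def rdd (R : Set W) (G : Sub W) : ℝ :=
  ((nedges G : ℝ) - (rInEdges R G : ℝ)) / ((nverts G : ℝ) - ((G.verts ∩ R).ncard : ℝ))

/-- `m(R,G) = max_{H ⊆ G} d(R ∩ V(H), H)` -/
def mRooted (R : Set W) (G : Sub W) : ℝ := ⨆ H : {H : Sub W // H ≤ G}, rdd R H.1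

/-- a rooted graph is balanced if its density attains `m(R,G)`. -/
def BalancedRooted (R : Set W) (G : Sub W) : Prop := mRooted R G = rdd R G

/-- the rooted `2`-density `d₂(R,G,t)`, valued in `ℝ≥0∞`. -/
def d2t (R : Set W) (G : Sub W) (t : ℝ) : ℝ≥0∞ :=
  if 0 < (nverts G : ℝ) - 2 - t * (rInEdges R G : ℝ) then
    ENNReal.ofReal ((((nedges G : ℝ) - (rInEdges R G : ℝ)) - 1) /
      ((nverts G : ℝ) - 2 - t * (rInEdges R G : ℝ)))
  else ⊤

/-- `m₂(R,G,t)`, the maximum of `d₂(R ∩ V(H), H, t)` over subgraphs `H ⊆ G` with `ē_H > 1`. -/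
def m2t (R : Set W) (G : Sub W) (t : ℝ) : ℝ≥0∞ :=
  ⨆ H : {H : Sub W // H ≤ G ∧ rInEdges R H + 2 ≤ nedges H}, d2t R H.1 t


/-! ### Products of rooted graphs and the families 𝓕ᵏ -/

/-- `e` is a non-root edge of `Fg` w.r.t. the root set `R`. -/
def NRe (Fg : Sub W) (R : Set W) (e : Sym2 W) : Prop := e ∈ Fg.edgeSet ∧ ¬ ∀ x ∈ e, x ∈ R

/-- `P` (together with the placement maps `φ`, `ψ`) is a copy of the product `(R,Fg) × (h₁h₂, H)`:
it is obtained from `Fg` by attaching to every non-root edge of `Fg` a new copy of `H`,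
rooted at that edge (the edge itself being kept iff `h₁h₂ ∈ E(H)`). -/
def IsProdCopyData (Fg : Sub W) (R : Set W) (H : Sub U) (h₁ h₂ : U) (P : Sub X)
    (φ : W → X) (ψ : Sym2 W → U → X) : Prop :=
  Set.InjOn φ Fg.verts ∧
  (∀ e, NRe Fg R e → Set.InjOn (ψ e) H.verts) ∧
  (∀ e, NRe Fg R e → ∀ x y : W, e = s(x, y) →
      ({ψ e h₁, ψ e h₂} : Set X) = {φ x, φ y}) ∧
  (∀ e e', NRe Fg R e → NRe Fg R e' → e ≠ e' →
      Disjoint (ψ e '' (H.verts \ {h₁, h₂})) (ψ e' '' (H.verts \ {h₁, h₂}))) ∧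
  (∀ e, NRe Fg R e → Disjoint (ψ e '' (H.verts \ {h₁, h₂})) (φ '' Fg.verts)) ∧
  (P.verts = φ '' Fg.verts ∪ ⋃ e ∈ {e | NRe Fg R e}, ψ e '' H.verts) ∧
  (∀ x y, P.Adj x y ↔
    ((∃ p q, Fg.Adj p q ∧ p ∈ R ∧ q ∈ R ∧ x = φ p ∧ y = φ q) ∨
      ∃ e, NRe Fg R e ∧ ∃ p q, H.Adj p q ∧ x = ψ e p ∧ y = ψ e q))

/-- `P` is a copy of the product `(R,Fg) × (h₁h₂, H)` placed by `φ`. -/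
def IsProdCopy (Fg : Sub W) (R : Set W) (H : Sub U) (h₁ h₂ : U) (P : Sub X) (φ : W → X) : Prop :=
  ∃ ψ, IsProdCopyData Fg R H h₁ h₂ P φ ψ

/-- `InF F u v k G a b` : the graph `G` rooted at `(a, b)` is (a copy of) a member of
the family `𝓕ᵏ` built from the graph `F` with distinguished edge `{u,v}`.
`𝓕¹` consists of a single edge rooted at its endpoints, and for `k ≥ 2`,
`𝓕ᵏ = { ⊔_{1 ≤ i < k} (e,F)×(eᵢ,Fᵢ*) : Fᵢ* ∈ 𝓕^{≤i} }`, the parts being joined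
at the common roots and otherwise disjoint. -/
inductive InF (F : Sub ℕ) (u v : ℕ) : ℕ → Sub ℕ → ℕ → ℕ → Prop
  | base (a b : ℕ) (G : Sub ℕ) (hab : a ≠ b) (hv : G.verts = {a, b})
      (he : G.edgeSet = {s(a, b)}) : InF F u v 1 G a b
  | step (k a b : ℕ) (P : ℕ → Sub ℕ) (G : Sub ℕ)
      (j : ℕ → ℕ) (Fi : ℕ → Sub ℕ) (c d : ℕ → ℕ) (φ : ℕ → ℕ → ℕ)
      (hk : 2 ≤ k)
      (hj : ∀ i, 1 ≤ i → i < k → 1 ≤ j i ∧ j i ≤ i)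
      (hrec : ∀ i, 1 ≤ i → i < k → InF F u v (j i) (Fi i) (c i) (d i))
      (hprod : ∀ i, 1 ≤ i → i < k →
        IsProdCopy F {u, v} (Fi i) (c i) (d i) (P i) (φ i) ∧
          ({φ i u, φ i v} : Set ℕ) = {a, b})
      (hdisj : ∀ i i', 1 ≤ i → i < k → 1 ≤ i' → i' < k → i ≠ i' →
        (P i).verts ∩ (P i').verts = {a, b})
      (hG : G = ⨆ i ∈ Set.Ico 1 k, P i) : InF F u v k G a b

/-- membership in `𝓕^{≤ m} = ∪_{1 ≤ j ≤ m} 𝓕ʲ`. -/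
def InFle (F : Sub ℕ) (u v : ℕ) (m : ℕ) (G : Sub ℕ) (a b : ℕ) : Prop :=
  ∃ j, 1 ≤ j ∧ j ≤ m ∧ InF F u v j G a b


/-! ### Partite graphs, regularity -/

/-- number of edges of a `SimpleGraph`. -/
def eCnt {V : Type*} (G : SimpleGraph V) : ℕ := G.edgeSet.ncard

/-- number of edges of `G` having all endpoints inside `R`, i.e. `e_{G[R]}`. -/
def eIn {V : Type*} (G : SimpleGraph V) (R : Finset V) : ℕ :=
  {e ∈ G.edgeSet | ∀ x ∈ e, x ∈ R}.ncard

/-- `F₋`: the graph `F` with all edges inside the root set `R` removed. -/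
def Fm {V : Type*} (F : SimpleGraph V) (R : Finset V) : SimpleGraph V :=
  F.deleteEdges {e | ∀ x ∈ e, x ∈ R}

/-- edge density of the bipartite pair `(s,t)` in `G`. -/
def bidensity {V : Type*} (G : SimpleGraph V) (s t : Finset V) : ℝ :=
  ({pq : V × V | pq.1 ∈ s ∧ pq.2 ∈ t ∧ G.Adj pq.1 pq.2}.ncard : ℝ) /
    ((s.card : ℝ) * (t.card : ℝ))

/-- the pair `(s,t)` is `(ε)`-regular in `G`: for all `s' ⊆ s`, `t' ⊆ t` with
`|s'| ≥ ε|s|`, `|t'| ≥ ε|t|` the density deviates by at most `ε` times the density of the pair. -/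
def EpsRegular {V : Type*} (G : SimpleGraph V) (ε : ℝ) (s t : Finset V) : Prop :=
  ∀ s' t' : Finset V, s' ⊆ s → t' ⊆ t → ε * s.card ≤ s'.card → ε * t.card ≤ t'.card →
    |bidensity G s' t' - bidensity G s t| ≤ ε * bidensity G s t

/-- the `i`-th vertex class `V_i` of the canonical `|ι|`-partite vertex set `ι × Fin n`. -/
def prt (ι : Type*) [Fintype ι] (n : ℕ) (i : ι) : Finset (ι × Fin n) :=
  Finset.univ.filter fun pq => pq.1 = i

variable {ι : Type*} [Fintype ι]

/-- `G` is partite w.r.t. `Fm`: its edges run only between vertex classes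
corresponding to edges of `Fm`. -/
def partiteOn (Fmg : SimpleGraph ι) (n : ℕ) (G : SimpleGraph (ι × Fin n)) : Prop :=
  ∀ x y, G.Adj x y → Fmg.Adj x.1 y.1

/-- number of edges of `G` between the classes `V_i` and `V_j`. -/
def ebp (n : ℕ) (G : SimpleGraph (ι × Fin n)) (i j : ι) : ℕ :=
  {pq : (ι × Fin n) × (ι × Fin n) | pq.1.1 = i ∧ pq.2.1 = j ∧ G.Adj pq.1 pq.2}.ncard

/-- `G ∈ 𝓖(Fmg, n, m, ε)`: `G` is `Fmg`-partite, with exactly `m` edges between classes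
joined by an edge of `Fmg`, all such pairs being `(ε)`-regular. -/
def inG (Fmg : SimpleGraph ι) (n m : ℕ) (ε : ℝ) (G : SimpleGraph (ι × Fin n)) : Prop :=
  partiteOn Fmg n G ∧
    ∀ i j, Fmg.Adj i j → ebp n G i j = m ∧ EpsRegular G ε (prt ι n i) (prt ι n j)

/-- `G_R` is `(F,q,ε)`-lower-regular. -/
def LowerReg (F : SimpleGraph ι) (R : Finset ι) (n : ℕ) (GR : Finset ((↥R) → Fin n))
    (q ε : ℝ) : Prop :=
  ∀ Wf : (↥R) → Finset (Fin n), (∀ i, ε * n ≤ ((Wf i).card : ℝ)) →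
    q ^ eIn F R * ∏ i, ((Wf i).card : ℝ) ≤ ((GR.filter fun e => ∀ i, e i ∈ Wf i).card : ℝ)

/-- `G_R` is `(F,q)`-upper-extensible. -/
def UpperExt (F : SimpleGraph ι) (R : Finset ι) (n : ℕ) (GR : Finset ((↥R) → Fin n))
    (q : ℝ) : Prop :=
  ∀ S : Finset ι, S ⊆ R → ∀ g : ι → Fin n,
    ((GR.filter fun e => ∀ i : ↥R, (i : ι) ∈ S → e i = g (i : ι)).card : ℝ) ≤
      q ^ (eIn F R - eIn F S) * (n : ℝ) ^ (R.card - S.card)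

/-- the number of edges, counted with multiplicity, of the multi-hypergraph `T(G, G_R)`:
for each `e ∈ G_R` the number of partite copies of `F₋` in `G` containing the vertices of `e`. -/
def Tcount (F : SimpleGraph ι) (R : Finset ι) (n : ℕ) (G : SimpleGraph (ι × Fin n))
    (GR : Finset ((↥R) → Fin n)) : ℕ :=
  ∑ e ∈ GR, {f : ι → Fin n |
      (∀ i j, (Fm F R).Adj i j → G.Adj (i, f i) (j, f j)) ∧
      ∀ i : ↥R, f (i : ι) = e i}.ncard

/-! ### The hypergraph 𝓔(G_R, F) and its co-degree function -/

/-- the edge set of the partite copy of `Fmg` given by the transversal `f`. -/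
def copyEdges (Fmg : SimpleGraph ι) {n : ℕ} (f : ι → Fin n) : Set (Sym2 (ι × Fin n)) :=
  Sym2.map (fun i => (i, f i)) '' Fmg.edgeSet

/-- the degree in `𝓔(G_R,F)` of a set `σ` of vertices (i.e. of edges of `K_{F₋,n}`):
the number of partite copies of `F₋` whose roots form an edge of `G_R` and whose
edge set contains `σ`. -/
def degI (F : SimpleGraph ι) (R : Finset ι) {n : ℕ} (GR : Finset ((↥R) → Fin n))
    (σ : Finset (Sym2 (ι × Fin n))) : ℕ :=
  {pf : ((↥R) → Fin n) × (ι → Fin n) |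
    pf.1 ∈ GR ∧ (∀ i : ↥R, pf.2 (i : ι) = pf.1 i) ∧ ↑σ ⊆ copyEdges (Fm F R) pf.2}.ncard

/-- `d^{(j)}(v)`: the maximal degree of a `j`-set containing `v`. -/
def djI (F : SimpleGraph ι) (R : Finset ι) {n : ℕ} (GR : Finset ((↥R) → Fin n))
    (jj : ℕ) (v : Sym2 (ι × Fin n)) : ℕ :=
  ⨆ σ : {σ : Finset (Sym2 (ι × Fin n)) // v ∈ σ ∧ σ.card = jj}, degI F R GR σ.1

/-- the co-degree function `δ(𝓔(G_R,F), τ)` of Saxton–Thomason. -/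
def codegFn (F : SimpleGraph ι) (R : Finset ι) {n : ℕ} (GR : Finset ((↥R) → Fin n))
    (τ : ℝ) : ℝ :=
  if (∑ v : Sym2 (ι × Fin n), degI F R GR {v}) = 0 then 0 else
    (2 : ℝ) ^ ((eCnt (Fm F R)).choose 2 - 1) *
      ∑ jj ∈ Finset.Icc 2 (eCnt (Fm F R)),
        ((∑ v : Sym2 (ι × Fin n), (djI F R GR jj v : ℝ)) /
            (τ ^ (jj - 1) * ∑ v : Sym2 (ι × Fin n), (degI F R GR {v} : ℝ))) *
          ((2 : ℝ) ^ ((jj - 1).choose 2))⁻¹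


/-! ### The online F-avoidance game -/

/-- the edges of the complete graph `K_n`. -/
abbrev En (n : ℕ) := {e : Sym2 (Fin n) // ¬ e.IsDiag}

/-- a (deterministic) Painter strategy: given the history of previously presented
edges together with their colors, and the newly presented edge, pick a color. -/
abbrev Strategy (n r : ℕ) := List (En n × Fin r) → En n → Fin r

/-- the history (presented edges with their colors, in order) after `N` rounds of
the game in which the edges arrive in the order `π` and Painter plays `σ`. -/
def histF {n r : ℕ} (σ : Strategy n r) (π : Fin (Nat.choose n 2) → En n) :
    ℕ → List (En n × Fin r)
  | 0 => []
  | i + 1 =>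
      histF σ π i ++
        if h : i < Nat.choose n 2 then
          [(π ⟨i, h⟩, σ (histF σ π i) (π ⟨i, h⟩))]
        else []

/-- the edge `e` occurs in the history `L` with color `c`. -/
def ListColored {n r : ℕ} (L : List (En n × Fin r)) (e : Sym2 (Fin n)) (c : Fin r) : Prop :=
  ∃ pr ∈ L, (pr.1 : Sym2 (Fin n)) = e ∧ pr.2 = c

/-- the graph of all edges of color `c` in the history `L`. -/
def colorGraphL {n r : ℕ} (L : List (En n × Fin r)) (c : Fin r) : SimpleGraph (Fin n) :=
  SimpleGraph.fromEdgeSet {e | ListColored L e c}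

/-- the graph of all presented edges in the history `L`. -/
def presentedGraphL {n r : ℕ} (L : List (En n × Fin r)) : SimpleGraph (Fin n) :=
  SimpleGraph.fromEdgeSet {e | ∃ c, ListColored L e c}

/-- the graph of edges colored `c` after `N` rounds. -/
def colorGraph {n r : ℕ} (σ : Strategy n r) (π : Fin (Nat.choose n 2) → En n) (N : ℕ)
    (c : Fin r) : SimpleGraph (Fin n) :=
  colorGraphL (histF σ π N) c

/-- the probability, under an edge ordering chosen uniformly at random among all
`(n choose 2)!` orderings of the edges of `K_n`, of the event `P`. -/
def gameProb (n : ℕ) (P : (Fin (Nat.choose n 2) → En n) → Prop) : ℝ :=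
  ({π : Fin (Nat.choose n 2) → En n | Function.Bijective π ∧ P π}.ncard : ℝ) /
    ({π : Fin (Nat.choose n 2) → En n | Function.Bijective π}.ncard : ℝ)

/-- some color class after `N` rounds contains a copy of the (finite) graph `F`. -/
def MonoCopy (F : Sub ℕ) {n r : ℕ} (σ : Strategy n r) (π : Fin (Nat.choose n 2) → En n)
    (N : ℕ) : Prop :=
  ∃ (c : Fin r) (φ : ℕ → Fin n), Set.InjOn φ F.verts ∧
    ∀ x y, F.Adj x y → (colorGraph σ π N c).Adj (φ x) (φ y)

/-- Painter survives `N` rounds: after `N` edges have been presented and colored,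
no color class contains a copy of `F`. -/
def Survive {α : Type*} (F : SimpleGraph α) {n r : ℕ} (σ : Strategy n r)
    (π : Fin (Nat.choose n 2) → En n) (N : ℕ) : Prop :=
  ∀ c : Fin r, ¬ ∃ φ : α ↪ Fin n, ∀ x y, F.Adj x y → (colorGraph σ π N c).Adj (φ x) (φ y)

/-! ### The binomial random graph -/

/-- probability of the event `P` for the binomial random graph `G(n,p)`. -/
def gnpProb (n : ℕ) (p : ℝ) (P : SimpleGraph (Fin n) → Prop) : ℝ :=
  ∑ G : SimpleGraph (Fin n),
    if P G then p ^ eCnt G * (1 - p) ^ (Nat.choose n 2 - eCnt G) else 0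

/-- the number of copies of the rooted graph `(ρ, G)` (with ordered roots `ρ`) spanned by
the tuple `f` in `Γ`: embeddings of `G - G[R]` carrying the roots `ρ` to `f` in order. -/
def spanCount {α : Type*} (G : SimpleGraph α) {k : ℕ} (ρ : Fin k ↪ α) {n : ℕ}
    (Γ : SimpleGraph (Fin n)) (f : Fin k ↪ Fin n) : ℕ :=
  {φ : α → Fin n | Function.Injective φ ∧ (∀ i, φ (ρ i) = f i) ∧
    ∀ x y, G.Adj x y → ¬(x ∈ Set.range ρ ∧ y ∈ Set.range ρ) → Γ.Adj (φ x) (φ y)}.ncard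

/-! ### F*-spanning subgraphs, upper uniformity -/

/-- `G` is an `F*`-spanning subgraph of `Γ` (where `F*` is rooted at `a, b`):
every edge of `G` is the root pair of a copy of `F*` in `Γ` whose non-root vertices
avoid `V(G)`, these copies being pairwise edge-disjoint. -/
def FStarSpanning {n : ℕ} (Fs : Sub ℕ) (a b : ℕ) (Γ : SimpleGraph (Fin n))
    (G : Sub (Fin n)) : Prop :=
  ∃ κ : Sym2 (Fin n) → ℕ → Fin n,
    (∀ e ∈ G.edgeSet, Set.InjOn (κ e) Fs.verts) ∧
    (∀ e ∈ G.edgeSet, ∀ x y : Fin n, e = s(x, y) →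
      ({κ e a, κ e b} : Set (Fin n)) = {x, y}) ∧
    (∀ e ∈ G.edgeSet, ∀ w ∈ Fs.verts, w ≠ a → w ≠ b → κ e w ∉ G.verts) ∧
    (∀ e ∈ G.edgeSet, ∀ w w', Fs.Adj w w' → Γ.Adj (κ e w) (κ e w')) ∧
    (∀ e ∈ G.edgeSet, ∀ e' ∈ G.edgeSet, e ≠ e' →
      Disjoint (Sym2.map (κ e) '' Fs.edgeSet) (Sym2.map (κ e') '' Fs.edgeSet))

/-- number of edges of `G` from `s` to `t`. -/
def eBetween {V : Type*} (G : Sub V) (s t : Set V) : ℕ :=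
  {pq : V × V | pq.1 ∈ s ∧ pq.2 ∈ t ∧ G.Adj pq.1 pq.2}.ncard

/-- `G` is `(η,q)`-upper-uniform. -/
def UpperUniform {V : Type*} (G : Sub V) (η q : ℝ) : Prop :=
  ∀ s t : Set V, s ⊆ G.verts → t ⊆ G.verts → Disjoint s t →
    η * (nverts G : ℝ) ≤ (s.ncard : ℝ) → η * (nverts G : ℝ) ≤ (t.ncard : ℝ) →
    (eBetween G s t : ℝ) ≤ (1 + η) * q * (s.ncard : ℝ) * (t.ncard : ℝ)

/-! ### Dangerous copies -/

/-- `col` is a dangerous `r`-coloring of `F*₋` for `F* ∈ 𝓕ᵏ` (rooted at `a,b`):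
for some decomposition of `F*` as in the construction of `𝓕ᵏ`, the `k-1` copies of
`F₋` whose roots were identified in the construction are monochromatic, with pairwise
different colors. -/
def DangerousColoring (F : Sub ℕ) (u v : ℕ) (k : ℕ) (Fs : Sub ℕ) (a b : ℕ) (r : ℕ)
    (col : Sym2 ℕ → Fin r) : Prop :=
  k = 1 ∨ ∃ (P : ℕ → Sub ℕ) (c : ℕ → Fin r),
    Fs = (⨆ i ∈ Set.Ico 1 k, P i) ∧
    (∀ i ∈ Set.Ico 1 k, ∀ i' ∈ Set.Ico 1 k, i ≠ i' →
      c i ≠ c i' ∧ (P i).verts ∩ (P i').verts = {a, b}) ∧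
    ∀ i ∈ Set.Ico 1 k, ∃ (j : ℕ) (Fi : Sub ℕ) (c' d' : ℕ) (φ : ℕ → ℕ),
      1 ≤ j ∧ j ≤ i ∧ InF F u v j Fi c' d' ∧
      IsProdCopy F {u, v} Fi c' d' (P i) φ ∧ ({φ u, φ v} : Set ℕ) = {a, b} ∧
      ∀ x y, F.Adj x y → ¬(x ∈ ({u, v} : Set ℕ) ∧ y ∈ ({u, v} : Set ℕ)) →
        col (s(φ x, φ y)) = c i

/-- `P` is a dangerous copy of `F × (e, F*₋)` in the colored graph after `N` rounds:
a copy of the product of `F` (all edges of `F` being used) with `F*₋` rooted at `(a,b)`,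
all of whose attached copies of `F*₋` are colored according to one and the same
dangerous coloring. -/
def IsDangerousCopy (F : Sub ℕ) (u v : ℕ) (r : ℕ) (Fs : Sub ℕ) (a b : ℕ) {n : ℕ}
    (σ : Strategy n r) (π : Fin (Nat.choose n 2) → En n) (N : ℕ) (P : Sub (Fin n)) : Prop :=
  ∃ (φ : ℕ → Fin n) (ψ : Sym2 ℕ → ℕ → Fin n) (col : Sym2 ℕ → Fin r),
    IsProdCopyData F ∅ (Fs.deleteEdges {s(a, b)}) a b P φ ψ ∧
    DangerousColoring F u v r Fs a b r col ∧
    ∀ e, NRe F ∅ e → ∀ x y, (Fs.deleteEdges {s(a, b)}).Adj x y →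
      ListColored (histF σ π N) (s(ψ e x, ψ e y)) (col (s(x, y)))

/-! ### The multi-phase game -/

/-- one phase of the multi-phase game: the edges of `K_n` are scanned in the order `π`;
those belonging to the phase graph `Gph` and not previously presented are presented to
Painter (playing `σ`), who colors them immediately. -/
def phaseStep {n r : ℕ} (σ : Strategy n r) (Gph : SimpleGraph (Fin n))
    (π : Fin (Nat.choose n 2) → En n) (init : List (En n × Fin r)) :
    ℕ → List (En n × Fin r)
  | 0 => init
  | jj + 1 =>
      let L := phaseStep σ Gph π init jj
      if h : jj < Nat.choose n 2 then
        if (((π ⟨jj, h⟩ : En n) : Sym2 (Fin n)) ∈ Gph.edgeSet ∧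
            ∀ pr ∈ L, pr.1 ≠ π ⟨jj, h⟩) then
          L ++ [(π ⟨jj, h⟩, σ L (π ⟨jj, h⟩))]
        else L
      else L

/-- the history after the first `i` phases of the multi-phase game with phase graphs `Gs`
and phase edge-orderings `πs`. -/
def multiHist {n r k : ℕ} (σ : Strategy n r) (Gs : Fin k → SimpleGraph (Fin n))
    (πs : Fin k → Fin (Nat.choose n 2) → En n) : ℕ → List (En n × Fin r)
  | 0 => []
  | i + 1 =>
      if h : i < k then
        phaseStep σ (Gs ⟨i, h⟩) (πs ⟨i, h⟩) (multiHist σ Gs πs i) (Nat.choose n 2)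
      else multiHist σ Gs πs i

/-- probability of the event `P` when `k` independent copies of `G(n,p)` are sampled,
each with an independent uniformly random ordering of the edges of `K_n`. -/
def phasesProb (n k : ℕ) (p : ℝ)
    (P : (Fin k → SimpleGraph (Fin n)) → (Fin k → Fin (Nat.choose n 2) → En n) → Prop) : ℝ :=
  (∑ Gs : Fin k → SimpleGraph (Fin n), ∑ πs : Fin k → Fin (Nat.choose n 2) → En n,
      if (∀ i, Function.Bijective (πs i)) ∧ P Gs πs then
        ∏ i, p ^ eCnt (Gs i) * (1 - p) ^ (Nat.choose n 2 - eCnt (Gs i))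
      else 0) /
    ({π : Fin (Nat.choose n 2) → En n | Function.Bijective π}.ncard : ℝ) ^ k

/-- witness data for Lemma `force regular`: a `t`-partite graph `G` with classes `parts`
of size `nn`, `m` edges between classes, monochromatic in color `col`, which is
`F*`-spanning for the member `(Fs, a, b)` of `𝓕^{≤|S|+1}`. -/
structure Wit (n r t : ℕ) where
  parts : Fin t → Finset (Fin n)
  G : Sub (Fin n)
  col : Fin r
  nn : ℕ
  m : ℕ
  Fs : Sub ℕ
  a : ℕ
  b : ℕ

/-- validity of a witness for Lemma `force regular` (see `Wit`). -/
def WitValid (F : Sub ℕ) (u v : ℕ) {n r t k : ℕ} (S : Finset (Fin r)) (ε η pn : ℝ)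
    (σ : Strategy n r) (Gs : Fin k → SimpleGraph (Fin n))
    (πs : Fin k → Fin (Nat.choose n 2) → En n) (w : Wit n r t) : Prop :=
  w.col ∉ S ∧
  (∃ jj : ℕ, 1 ≤ jj ∧ jj ≤ S.card + 1 ∧ InF F u v jj w.Fs w.a w.b) ∧
  η * (n : ℝ) ≤ (w.nn : ℝ) ∧
  η * (n : ℝ) ^ nverts w.Fs * pn ^ nedges w.Fs ≤ (w.m : ℝ) ∧
  (∀ i, (w.parts i).card = w.nn) ∧
  (∀ i i', i ≠ i' → Disjoint (w.parts i) (w.parts i')) ∧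
  (∀ x y, w.G.Adj x y → ∃ i i', i ≠ i' ∧ x ∈ w.parts i ∧ y ∈ w.parts i') ∧
  (∀ i i', i ≠ i' → eBetween w.G (↑(w.parts i)) (↑(w.parts i')) = w.m ∧
      EpsRegular w.G.spanningCoe ε (w.parts i) (w.parts i')) ∧
  w.G.verts = ⋃ i, ↑(w.parts i) ∧
  (∀ x y, w.G.Adj x y → ListColored (multiHist σ Gs πs k) (s(x, y)) w.col) ∧
  FStarSpanning w.Fs w.a w.b (presentedGraphL (multiHist σ Gs πs k)) w.G

/-- an equitable partition of `Fin n` into `rr` classes. -/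
def Equitable {n rr : ℕ} (P : Fin n → Fin rr) : Prop :=
  ∀ x y : Fin rr, (P ⁻¹' {x}).ncard ≤ (P ⁻¹' {y}).ncard + 1

/-- edges of the simple graph `C` between `s` and `t`. -/
def eBetweenS {V : Type*} (C : SimpleGraph V) (s t : Set V) : ℕ :=
  {pq : V × V | pq.1 ∈ s ∧ pq.2 ∈ t ∧ C.Adj pq.1 pq.2}.ncard

open scoped Topology

private lemma sub_edgeSet_finite {W : Type*} {G : Sub W} (h : G.verts.Finite) :
    G.edgeSet.Finite := by
  apply ((h.prod h).image (fun p : W × W => s(p.1, p.2))).subset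
  intro e
  induction e using Sym2.ind with
  | _ x y =>
    intro he
    have hadj : G.Adj x y := SimpleGraph.Subgraph.mem_edgeSet.mp he
    exact ⟨(x, y), ⟨G.edge_vert hadj, G.edge_vert hadj.symm⟩, rfl⟩

private lemma sub_exists_adj {W : Type*} {G : Sub W} (h : G.edgeSet.Nonempty) :
    ∃ x y, G.Adj x y := by
  obtain ⟨e₀, he₀⟩ := h
  revert he₀
  induction e₀ using Sym2.ind with
  | _ x y => exact fun h => ⟨x, y, SimpleGraph.Subgraph.mem_edgeSet.mp h⟩

private lemma sub_nedges_le_one {W : Type*} {G : Sub W} (hfin : G.verts.Finite)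
    (h2 : G.verts.ncard ≤ 2) : G.edgeSet.ncard ≤ 1 := by
  rcases Set.eq_empty_or_nonempty G.edgeSet with h | h
  · simp [h]
  obtain ⟨x, y, hadj⟩ := sub_exists_adj h
  have hxy : x ≠ y := hadj.ne
  have hsub : ({x, y} : Set W) ⊆ G.verts :=
    Set.insert_subset (G.edge_vert hadj) (Set.singleton_subset_iff.mpr (G.edge_vert hadj.symm))
  have hverts : ({x, y} : Set W) = G.verts :=
    Set.eq_of_subset_of_ncard_le hsub (by rwa [Set.ncard_pair hxy]) hfin
  have hsubE : G.edgeSet ⊆ {s(x, y)} := by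
    intro e
    induction e using Sym2.ind with
    | _ z w =>
      intro heE
      have hzw : G.Adj z w := SimpleGraph.Subgraph.mem_edgeSet.mp heE
      have hne : z ≠ w := hzw.ne
      have hz : z ∈ ({x, y} : Set W) := by rw [hverts]; exact G.edge_vert hzw
      have hw : w ∈ ({x, y} : Set W) := by rw [hverts]; exact G.edge_vert hzw.symm
      simp only [Set.mem_insert_iff, Set.mem_singleton_iff] at hz hw
      show s(z, w) = s(x, y)
      rcases hz with rfl | rfl <;> rcases hw with rfl | rfl
      · exact absurd rfl hne
      · rfl
      · exact Sym2.eq_swap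
      · exact absurd rfl hne
  exact (Set.ncard_le_ncard hsubE (Set.finite_singleton _)).trans (by simp)

private def imgSub {W : Type*} (F F₁ : Sub W) (ι : F₁.coe ≃g F.coe) (H : Sub W) :
    Sub W where
  verts := (fun x : F₁.verts => (ι x : W)) '' {x : F₁.verts | (x : W) ∈ H.verts}
  Adj x y := ∃ x' y' : F₁.verts, H.Adj x' y' ∧ x = (ι x' : W) ∧ y = (ι y' : W)
  adj_sub := by
    rintro x y ⟨x', y', hxy, rfl, rfl⟩
    have hne : x' ≠ y' := fun h => hxy.ne (by rw [h])
    have : ι x' ≠ ι y' := fun h => hne (ι.toEquiv.injective h)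
    exact (SimpleGraph.top_adj _ _).mpr (fun h => this (Subtype.val_injective h))
  edge_vert := by
    rintro x y ⟨x', y', hxy, rfl, rfl⟩
    exact ⟨x', H.edge_vert hxy, rfl⟩
  symm := ⟨by
    rintro x y ⟨x', y', hxy, rfl, rfl⟩
    exact ⟨y', x', hxy.symm, rfl, rfl⟩⟩

private lemma sub_transfer {W : Type*} {F F₁ : Sub W} (hFfin : F.verts.Finite)
    (ι : F₁.coe ≃g F.coe) (H : Sub W) (hH : H ≤ F₁) :
    ∃ H' : Sub W, H' ≤ F ∧ nverts H' = nverts H ∧ nedges H ≤ nedges H' := by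
  classical
  set g : F₁.verts → W := fun x => (ι x : W) with hgdef
  have hginj : Function.Injective g := fun a b hab =>
    ι.toEquiv.injective (Subtype.val_injective hab)
  refine ⟨imgSub F F₁ ι H, ⟨?_, ?_⟩, ?_, ?_⟩
  · rintro x ⟨x', _, rfl⟩
    exact (ι x').2
  · rintro x y ⟨x', y', hxy, rfl, rfl⟩
    have h1 : F₁.coe.Adj x' y' := hH.2 hxy
    exact ι.map_adj_iff.mpr h1
  · show ((fun x : F₁.verts => (ι x : W)) ''
      {x : F₁.verts | (x : W) ∈ H.verts}).ncard = H.verts.ncard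
    have h2 : (((↑) : F₁.verts → W) '' (((↑) : F₁.verts → W) ⁻¹' H.verts)) = H.verts := by
      rw [Subtype.image_preimage_coe]
      exact Set.inter_eq_self_of_subset_right hH.1
    rw [Set.ncard_image_of_injective _ hginj]
    conv_rhs => rw [← h2, Set.ncard_image_of_injective _ Subtype.val_injective]
    rfl
  · set g' : W → W := fun w => if h : w ∈ F₁.verts then g ⟨w, h⟩ else w with hg'def
    have hg'eq : ∀ w (h : w ∈ F₁.verts), g' w = g ⟨w, h⟩ := fun w h => dif_pos h
    have hg'injOn : Set.InjOn g' F₁.verts := by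
      intro u hu w hw huw
      rw [hg'eq u hu, hg'eq w hw] at huw
      exact congrArg Subtype.val (hginj huw)
    have hmemV : ∀ {x y : W}, H.Adj x y → x ∈ F₁.verts := fun hadj =>
      hH.1 (H.edge_vert hadj)
    have himg : Sym2.map g' '' H.edgeSet ⊆ (imgSub F F₁ ι H).edgeSet := by
      rintro e ⟨e₀, he₀, rfl⟩
      revert he₀
      induction e₀ using Sym2.ind with
      | _ x y =>
        intro he₀
        have hadj : H.Adj x y := SimpleGraph.Subgraph.mem_edgeSet.mp he₀
        have hx : x ∈ F₁.verts := hmemV hadj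
        have hy : y ∈ F₁.verts := hmemV hadj.symm
        rw [Sym2.map_pair_eq, SimpleGraph.Subgraph.mem_edgeSet]
        exact ⟨⟨x, hx⟩, ⟨y, hy⟩, hadj, hg'eq x hx, hg'eq y hy⟩
    have hinj : Set.InjOn (Sym2.map g') H.edgeSet := by
      intro e₁ he₁ e₂ he₂ heq
      revert he₁ he₂ heq
      refine Sym2.inductionOn₂ e₁ e₂ (fun x y z w => ?_)
      intro h1 h2 heq
      have hadj1 : H.Adj x y := SimpleGraph.Subgraph.mem_edgeSet.mp h1
      have hadj2 : H.Adj z w := SimpleGraph.Subgraph.mem_edgeSet.mp h2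
      have hx := hmemV hadj1
      have hy := hmemV hadj1.symm
      have hz := hmemV hadj2
      have hw := hmemV hadj2.symm
      rw [Sym2.map_pair_eq, Sym2.map_pair_eq, Sym2.eq_iff] at heq
      rw [Sym2.eq_iff]
      rcases heq with ⟨ha, hb⟩ | ⟨ha, hb⟩
      · exact Or.inl ⟨hg'injOn hx hz ha, hg'injOn hy hw hb⟩
      · exact Or.inr ⟨hg'injOn hx hw ha, hg'injOn hy hz hb⟩
    calc nedges H = (Sym2.map g' '' H.edgeSet).ncard :=
          (Set.ncard_image_of_injOn hinj).symm
      _ ≤ _ := by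
          refine Set.ncard_le_ncard himg (sub_edgeSet_finite (hFfin.subset ?_))
          rintro x ⟨x', _, rfl⟩
          exact (ι x').2

theorem stmt7 {W : Type} (F F₁ F₂ : Sub W)
    (hFfin : F.verts.Finite) (h1fin : F₁.verts.Finite) (h2fin : F₂.verts.Finite)
    (hbal : TwoBalanced F) (he : 2 ≤ nedges F)
    (hiso1 : Nonempty (F₁.coe ≃g F.coe)) (hiso2 : Nonempty (F₂.coe ≃g F.coe))
    (hsome : (F₁.edgeSet ∩ F₂.edgeSet).Nonempty) (hnotall : ¬ F₁.edgeSet ⊆ F₂.edgeSet)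
    (p : ℕ → ℝ) (hp : ∀ n, 0 < p n)
    (hpo : (fun n => p n) =o[atTop] fun n => (n : ℝ) ^ (-(1 / m2D F))) :
    Tendsto (fun n : ℕ => (n : ℝ) ^ nverts F * p n ^ nedges F /
        ((n : ℝ) ^ nverts (F₁ ⊔ F₂) * p n ^ nedges (F₁ ⊔ F₂)))
      atTop atTop := by
  classical
  obtain ⟨ι₁⟩ := hiso1
  obtain ⟨ι₂⟩ := hiso2
  have hFe : F.edgeSet.Finite := sub_edgeSet_finite hFfin
  have h1e : F₁.edgeSet.Finite := sub_edgeSet_finite h1fin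
  have h2e : F₂.edgeSet.Finite := sub_edgeSet_finite h2fin
  -- counts of isomorphic copies
  have hcount : ∀ (F' : Sub W), F'.verts.Finite → (F'.coe ≃g F.coe) →
      nverts F' = nverts F ∧ nedges F' = nedges F := by
    intro F' hfin ι
    obtain ⟨A, hAle, hAv, hAe⟩ := sub_transfer hFfin ι F' le_rfl
    obtain ⟨B, hBle, hBv, hBe⟩ := sub_transfer hfin ι.symm F le_rfl
    constructor
    · refine le_antisymm ?_ ?_
      · rw [← hAv]; exact Set.ncard_le_ncard hAle.1 hFfin
      · rw [← hBv]; exact Set.ncard_le_ncard hBle.1 hfin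
    · refine le_antisymm ?_ ?_
      · exact hAe.trans (Set.ncard_le_ncard (SimpleGraph.Subgraph.edgeSet_mono hAle) hFe)
      · exact hBe.trans (Set.ncard_le_ncard (SimpleGraph.Subgraph.edgeSet_mono hBle)
          (sub_edgeSet_finite hfin))
  obtain ⟨hv1, he1⟩ := hcount F₁ h1fin ι₁
  obtain ⟨hv2, he2⟩ := hcount F₂ h2fin ι₂
  -- the intersection graph
  have hHle : F₁ ⊓ F₂ ≤ F₁ := inf_le_left
  have hHvfin : (F₁ ⊓ F₂).verts.Finite := h1fin.subset hHle.1
  have hHefin : (F₁ ⊓ F₂).edgeSet.Finite :=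
    h1e.subset (SimpleGraph.Subgraph.edgeSet_mono hHle)
  have hHedge : (F₁ ⊓ F₂).edgeSet = F₁.edgeSet ∩ F₂.edgeSet :=
    SimpleGraph.Subgraph.edgeSet_inf
  have heI1 : 1 ≤ nedges (F₁ ⊓ F₂) :=
    (Set.ncard_pos hHefin).mpr (by rw [hHedge]; exact hsome)
  have heIlt : nedges (F₁ ⊓ F₂) < nedges F₁ := by
    apply Set.ncard_lt_ncard ?_ h1e
    rw [hHedge]
    exact ⟨Set.inter_subset_left, fun h => hnotall fun x hx => (h hx).2⟩
  have hvIle : nverts (F₁ ⊓ F₂) ≤ nverts F₁ := Set.ncard_le_ncard hHle.1 h1fin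
  have hvI2 : 2 ≤ nverts (F₁ ⊓ F₂) := by
    obtain ⟨x, y, hadj⟩ := sub_exists_adj (Set.nonempty_of_ncard_ne_zero
      (Nat.pos_iff_ne_zero.mp heI1))
    have hxy : x ≠ y := hadj.ne
    have hsub : ({x, y} : Set W) ⊆ (F₁ ⊓ F₂).verts :=
      Set.insert_subset ((F₁ ⊓ F₂).edge_vert hadj)
        (Set.singleton_subset_iff.mpr ((F₁ ⊓ F₂).edge_vert hadj.symm))
    have := Set.ncard_le_ncard hsub hHvfin
    rwa [Set.ncard_pair hxy] at this
  have hv3 : 3 ≤ nverts F := by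
    by_contra hcon
    push_neg at hcon
    have hcon' : F.verts.ncard < 3 := hcon
    have h1 := sub_nedges_le_one hFfin (by omega)
    have h2 : 2 ≤ F.edgeSet.ncard := he
    omega
  -- value and positivity of m₂
  have hm2 : m2D F = ((nedges F : ℝ) - 1) / ((nverts F : ℝ) - 2) := hbal
  have hv2R : (0:ℝ) < (nverts F : ℝ) - 2 := by
    have : (3:ℝ) ≤ (nverts F : ℝ) := by exact_mod_cast hv3
    linarith
  have he2R : (0:ℝ) < (nedges F : ℝ) - 1 := by
    have : (2:ℝ) ≤ (nedges F : ℝ) := by exact_mod_cast he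
    linarith
  have hmpos : 0 < m2D F := by rw [hm2]; exact div_pos he2R hv2R
  -- bounded above family for m₂
  have hbdd : BddAbove (Set.range fun H : {H : Sub W // H ≤ F ∧ 1 ≤ nedges H} => d2 H.1) := by
    refine ⟨(nedges F : ℝ), ?_⟩
    rintro x ⟨H, rfl⟩
    obtain ⟨hle, hne⟩ := H.2
    have heH : nedges H.1 ≤ nedges F :=
      Set.ncard_le_ncard (SimpleGraph.Subgraph.edgeSet_mono hle) hFe
    have heHR : (nedges H.1 : ℝ) ≤ (nedges F : ℝ) := by exact_mod_cast heH
    have hne1 : (1:ℝ) ≤ (nedges H.1 : ℝ) := by exact_mod_cast hne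
    show ((nedges H.1 : ℝ) - 1) / ((nverts H.1 : ℝ) - 2) ≤ (nedges F : ℝ)
    rcases le_or_gt ((nverts H.1 : ℝ) - 2) 0 with hd | hd
    · have : ((nedges H.1 : ℝ) - 1) / ((nverts H.1 : ℝ) - 2) ≤ 0 :=
        div_nonpos_of_nonneg_of_nonpos (by linarith) hd
      have h0e : (0:ℝ) ≤ (nedges F : ℝ) := Nat.cast_nonneg _
      linarith
    · have hn3 : 3 ≤ nverts H.1 := by
        by_contra hcon
        push_neg at hcon
        have : (nverts H.1 : ℝ) ≤ 2 := by
          have : nverts H.1 ≤ 2 := by omega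
          exact_mod_cast this
        linarith
      have h1le : (1:ℝ) ≤ (nverts H.1 : ℝ) - 2 := by
        have : (3:ℝ) ≤ (nverts H.1 : ℝ) := by exact_mod_cast hn3
        linarith
      rw [div_le_iff₀ hd]
      nlinarith
  -- the key inequality
  have key : ((nverts F : ℝ) - (nverts (F₁ ⊓ F₂) : ℝ)) * m2D F ≤
      (nedges F : ℝ) - (nedges (F₁ ⊓ F₂) : ℝ) := by
    rcases hvI2.eq_or_lt with h2 | h3
    · -- vI = 2, hence eI = 1
      have heI : nedges (F₁ ⊓ F₂) = 1 :=
        le_antisymm (sub_nedges_le_one hHvfin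
          (by have hr : nverts (F₁ ⊓ F₂) = (F₁ ⊓ F₂).verts.ncard := rfl; omega)) heI1
      have hvI : (nverts (F₁ ⊓ F₂) : ℝ) = 2 := by exact_mod_cast h2.symm
      have heIR : (nedges (F₁ ⊓ F₂) : ℝ) = 1 := by exact_mod_cast heI
      rw [hm2, hvI, heIR, mul_comm, div_mul_cancel₀ _ hv2R.ne']
    · -- vI ≥ 3
      obtain ⟨H', hle, hveq, hele⟩ := sub_transfer hFfin ι₁ (F₁ ⊓ F₂) hHle
      have hd2le : d2 H' ≤ m2D F := le_ciSup hbdd ⟨H', hle, le_trans heI1 hele⟩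
      have hvIR : (2:ℝ) < (nverts (F₁ ⊓ F₂) : ℝ) := by exact_mod_cast h3
      have hvIpos : (0:ℝ) < (nverts (F₁ ⊓ F₂) : ℝ) - 2 := by linarith
      have hd2 : d2 H' = ((nedges H' : ℝ) - 1) / ((nverts (F₁ ⊓ F₂) : ℝ) - 2) := by
        rw [show d2 H' = ((nedges H' : ℝ) - 1) / ((nverts H' : ℝ) - 2) from rfl, hveq]
      have hcross : ((nedges H' : ℝ) - 1) * ((nverts F : ℝ) - 2) ≤
          ((nedges F : ℝ) - 1) * ((nverts (F₁ ⊓ F₂) : ℝ) - 2) := by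
        rw [← div_le_div_iff₀ hvIpos hv2R, ← hd2, ← hm2]
        exact hd2le
      have heleR : (nedges (F₁ ⊓ F₂) : ℝ) ≤ (nedges H' : ℝ) := by exact_mod_cast hele
      rw [hm2, mul_comm, div_mul_eq_mul_div, div_le_iff₀ hv2R]
      nlinarith
  -- set up the exponents
  set a := nverts F - nverts (F₁ ⊓ F₂) with hadef
  set b := nedges F - nedges (F₁ ⊓ F₂) with hbdef
  have hvIleF : nverts (F₁ ⊓ F₂) ≤ nverts F := le_trans hvIle hv1.le
  have heIltF : nedges (F₁ ⊓ F₂) < nedges F := lt_of_lt_of_le heIlt he1.le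
  have haR : (a:ℝ) = (nverts F : ℝ) - (nverts (F₁ ⊓ F₂) : ℝ) := by
    rw [hadef, Nat.cast_sub hvIleF]
  have hbR : (b:ℝ) = (nedges F : ℝ) - (nedges (F₁ ⊓ F₂) : ℝ) := by
    rw [hbdef, Nat.cast_sub heIltF.le]
  have hb1 : 1 ≤ b := by omega
  -- vertex and edge counts of the union
  have hvu : nverts (F₁ ⊔ F₂) = nverts F + a := by
    have h := Set.ncard_union_add_ncard_inter F₁.verts F₂.verts h1fin h2fin
    have h1 : nverts (F₁ ⊔ F₂) = (F₁.verts ∪ F₂.verts).ncard := by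
      rw [nverts, SimpleGraph.Subgraph.verts_sup]
    have h2 : nverts (F₁ ⊓ F₂) = (F₁.verts ∩ F₂.verts).ncard := by
      rw [nverts, SimpleGraph.Subgraph.verts_inf]
    have h3 : nverts F₁ = F₁.verts.ncard := rfl
    have h4 : nverts F₂ = F₂.verts.ncard := rfl
    omega
  have heu : nedges (F₁ ⊔ F₂) = nedges F + b := by
    have h := Set.ncard_union_add_ncard_inter F₁.edgeSet F₂.edgeSet h1e h2e
    have h1 : nedges (F₁ ⊔ F₂) = (F₁.edgeSet ∪ F₂.edgeSet).ncard := by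
      rw [nedges, SimpleGraph.Subgraph.edgeSet_sup]
    have h2 : nedges (F₁ ⊓ F₂) = (F₁.edgeSet ∩ F₂.edgeSet).ncard := by
      rw [nedges, SimpleGraph.Subgraph.edgeSet_inf]
    have h3 : nedges F₁ = F₁.edgeSet.ncard := rfl
    have h4 : nedges F₂ = F₂.edgeSet.ncard := rfl
    omega
  -- asymptotics
  have hpb : (fun n : ℕ => p n ^ b) =o[atTop]
      (fun n : ℕ => ((n:ℝ) ^ (-(1 / m2D F))) ^ b) := hpo.pow (by omega)
  have hmul : (fun n : ℕ => (n:ℝ) ^ a * p n ^ b) =o[atTop]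
      (fun n : ℕ => (n:ℝ) ^ a * ((n:ℝ) ^ (-(1 / m2D F))) ^ b) :=
    (isBigO_refl (fun n : ℕ => (n:ℝ) ^ a) atTop).mul_isLittleO hpb
  have hO1 : (fun n : ℕ => (n:ℝ) ^ a * ((n:ℝ) ^ (-(1 / m2D F))) ^ b) =O[atTop]
      (fun _ : ℕ => (1:ℝ)) := by
    rw [isBigO_iff]
    refine ⟨1, ?_⟩
    filter_upwards [eventually_ge_atTop 1] with n hn
    have hn1 : (1:ℝ) ≤ (n:ℝ) := by exact_mod_cast hn
    have hn0 : (0:ℝ) < (n:ℝ) := by linarith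
    have hre : (n:ℝ) ^ a * ((n:ℝ) ^ (-(1 / m2D F))) ^ b =
        (n:ℝ) ^ ((a:ℝ) + (-(1 / m2D F)) * (b:ℝ)) := by
      rw [Real.rpow_add hn0, Real.rpow_natCast,
        ← Real.rpow_natCast ((n:ℝ) ^ (-(1 / m2D F))) b, ← Real.rpow_mul hn0.le]
    have hexp : (a:ℝ) + (-(1 / m2D F)) * (b:ℝ) ≤ 0 := by
      have hkey : (a:ℝ) * m2D F ≤ (b:ℝ) := by rw [haR, hbR]; exact key
      have h2 : (a:ℝ) ≤ (b:ℝ) / m2D F := (le_div_iff₀ hmpos).mpr hkey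
      have h3 : (-(1 / m2D F)) * (b:ℝ) = -((b:ℝ) / m2D F) := by ring
      rw [h3]
      linarith
    rw [hre]
    have hnn : (0:ℝ) ≤ (n:ℝ) ^ ((a:ℝ) + (-(1 / m2D F)) * (b:ℝ)) :=
      Real.rpow_nonneg hn0.le _
    rw [Real.norm_of_nonneg hnn]
    have : (n:ℝ) ^ ((a:ℝ) + (-(1 / m2D F)) * (b:ℝ)) ≤ 1 :=
      Real.rpow_le_one_of_one_le_of_nonpos hn1 hexp
    simpa using this
  have h0 : Tendsto (fun n : ℕ => (n:ℝ) ^ a * p n ^ b) atTop (𝓝 0) :=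
    (isLittleO_one_iff ℝ).mp (hmul.trans_isBigO hO1)
  have htends : Tendsto (fun n : ℕ => (n:ℝ) ^ a * p n ^ b) atTop (nhdsWithin 0 (Set.Ioi 0)) := by
    apply tendsto_nhdsWithin_of_tendsto_nhds_of_eventually_within _ h0
    filter_upwards [eventually_ge_atTop 1] with n hn
    have hn0 : (0:ℝ) < (n:ℝ) := by
      have : (1:ℝ) ≤ (n:ℝ) := by exact_mod_cast hn
      linarith
    exact mul_pos (pow_pos hn0 a) (pow_pos (hp n) b)
  have hinv := htends.inv_tendsto_nhdsGT_zero
  refine Tendsto.congr' ?_ hinv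
  filter_upwards [eventually_ge_atTop 1] with n hn
  have hn0 : (0:ℝ) < (n:ℝ) := by
    have : (1:ℝ) ≤ (n:ℝ) := by exact_mod_cast hn
    linarith
  show ((n:ℝ) ^ a * p n ^ b)⁻¹ = (n:ℝ) ^ nverts F * p n ^ nedges F /
      ((n:ℝ) ^ nverts (F₁ ⊔ F₂) * p n ^ nedges (F₁ ⊔ F₂))
  rw [hvu, heu, pow_add, pow_add]
  have hne1 : (n:ℝ) ≠ 0 := hn0.ne'
  have hne2 : p n ≠ 0 := (hp n).ne'
  field_simp

end OG
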